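/- For any partition of the natural numbers into two sets, at least one of the two sets contains infinitely many nontrivial 3-term arithmetic progressions; precisely, the set of pairs (a, d) with d > 0 such that a, a+d, a+2d all lie in that set is infinite. -/

import Mathlib

set_option maxRecDepth 10000 in
lemma vdw32 : ∀ c : Fin 9 → Bool, ∃ a d : Fin 9,
    0 < d.val ∧ a.val + 2 * d.val < 9 ∧ c a = c (a + d) ∧ c (a + d) = c (a + 2 * d) := by
  decide

lemma vdw32_nat (c : ℕ → Bool) (n : ℕ) : ∃ a d : ℕ, n ≤ a ∧ 0 < d ∧
    c a = c (a + d) ∧ c (a + d) = c (a + 2 * d) := by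
  obtain ⟨a, d, hd, hlt, h1, h2⟩ := vdw32 (fun i => c (n + i.val))
  refine ⟨n + a.val, d.val, Nat.le_add_right _ _, hd, ?_, ?_⟩
  · have : ((a + d : Fin 9) : ℕ) = a.val + d.val := by
      rw [Fin.val_add]; omega
    simpa [this, Nat.add_assoc] using h1
  · have h3 : ((a + d : Fin 9) : ℕ) = a.val + d.val := by
      rw [Fin.val_add]; omega
    have h4 : ((a + 2 * d : Fin 9) : ℕ) = a.val + 2 * d.val := by
      rw [Fin.val_add, Fin.val_mul]; omega
    simpa [h3, h4, Nat.add_assoc] using h2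

lemma infinite_of_unbounded_fst (s : Set (ℕ × ℕ)) (h : ∀ n, ∃ p ∈ s, n ≤ p.1) :
    s.Infinite := by
  intro hf
  obtain ⟨N, hN⟩ := (hf.image Prod.fst).bddAbove
  obtain ⟨p, hp, hle⟩ := h (N + 1)
  have := hN ⟨p, hp, rfl⟩
  omega

theorem stmt_1 (M₁ M₂ : Set ℕ) (hpart : M₁ ∪ M₂ = Set.univ) :
    {p : ℕ × ℕ | 0 < p.2 ∧ p.1 ∈ M₁ ∧ p.1 + p.2 ∈ M₁ ∧ p.1 + 2 * p.2 ∈ M₁}.Infinite ∨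
    {p : ℕ × ℕ | 0 < p.2 ∧ p.1 ∈ M₂ ∧ p.1 + p.2 ∈ M₂ ∧ p.1 + 2 * p.2 ∈ M₂}.Infinite := by
  classical
  set S₁ := {p : ℕ × ℕ | 0 < p.2 ∧ p.1 ∈ M₁ ∧ p.1 + p.2 ∈ M₁ ∧ p.1 + 2 * p.2 ∈ M₁}
  set S₂ := {p : ℕ × ℕ | 0 < p.2 ∧ p.1 ∈ M₂ ∧ p.1 + p.2 ∈ M₂ ∧ p.1 + 2 * p.2 ∈ M₂}
  by_contra hc
  push_neg at hc
  have hfin : (S₁ ∪ S₂).Finite := hc.1.union hc.2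
  have hmem : ∀ n : ℕ, n ∈ M₁ ∨ n ∈ M₂ := by
    intro n
    have : n ∈ M₁ ∪ M₂ := hpart ▸ Set.mem_univ n
    exact this
  apply (infinite_of_unbounded_fst (S₁ ∪ S₂) ?_) hfin
  intro n
  obtain ⟨a, d, hna, hd, h1, h2⟩ := vdw32_nat (fun m => decide (m ∈ M₁)) n
  refine ⟨(a, d), ?_, hna⟩
  by_cases hA : a ∈ M₁
  · left
    have e1 : (a + d) ∈ M₁ := by
      have := h1; simp [hA] at this; exact this
    have e2 : (a + 2 * d) ∈ M₁ := by
      have := h2; simp [e1] at this; exact this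
    exact ⟨hd, hA, e1, e2⟩
  · right
    have e1 : (a + d) ∉ M₁ := by
      have := h1; simp [hA] at this; exact this
    have e2 : (a + 2 * d) ∉ M₁ := by
      have := h2; simp [e1] at this; exact this
    exact ⟨hd, (hmem a).resolve_left hA, (hmem _).resolve_left e1, (hmem _).resolve_left e2⟩
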